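/- Let 0 < μ < λ ≤ 1 and let a : ℕ → ℝ be a bounded sequence (indexed from 1). For each integer m ≥ 0 define F_λ^m(a) := Σ_{n=1}^{∞} λ·(1−λ)^{n−1}·a_{m+n}. Then F_μ^0(a) = (μ/λ)·F_λ^0(a) + (μ/λ)·(λ−μ)·Σ_{m=0}^{∞} (1−μ)^m · F_λ^{m+1}(a). -/

import Mathlib

open scoped BigOperators

noncomputable section

/-- `Fdisc lam a m` is the `(1-lam)`-discounted valuation of the shifted sequence
`(a_{m+1}, a_{m+2}, …)`, where `a n` stands for the stage payoff `a_{n+1}`. -/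
def Fdisc (lam : ℝ) (a : ℕ → ℝ) (m : ℕ) : ℝ :=
  ∑' n : ℕ, lam * (1 - lam) ^ n * a (m + n)

/-- Sorin's algebraic identity decomposing a `(1-μ)`-discounted valuation as a
convex combination of `(1-λ)`-discounted valuations of shifted sequences. -/
theorem sorin_discount_decomposition
    (μ lam : ℝ) (hμ : 0 < μ) (hμlam : μ < lam) (hlam : lam ≤ 1)
    (a : ℕ → ℝ) (B : ℝ) (hB : ∀ n, |a n| ≤ B) :
    Fdisc μ a 0 =
      (μ / lam) * Fdisc lam a 0 +
        (μ / lam) * (lam - μ) * ∑' m : ℕ, (1 - μ) ^ m * Fdisc lam a (m + 1) := by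
  have hlam0 : 0 < lam := hμ.trans hμlam
  have hr0 : (0:ℝ) ≤ 1 - lam := by linarith
  have hr1 : 1 - lam < 1 := by linarith
  have hs0 : (0:ℝ) ≤ 1 - μ := by linarith
  have hs1 : 1 - μ < 1 := by linarith
  have hB0 : 0 ≤ B := (abs_nonneg _).trans (hB 0)
  -- summability of the inner series
  have hsum : ∀ m, Summable (fun n => lam * (1 - lam) ^ n * a (m + n)) := by
    intro m
    apply Summable.of_norm_bounded (g := fun n => (lam * B) * (1 - lam) ^ n)
      ((summable_geometric_of_lt_one hr0 hr1).mul_left _)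
    intro n
    rw [Real.norm_eq_abs, abs_mul, abs_mul, abs_of_nonneg hlam0.le,
      abs_of_nonneg (pow_nonneg hr0 n)]
    calc lam * (1 - lam) ^ n * |a (m + n)| ≤ lam * (1 - lam) ^ n * B := by
          apply mul_le_mul_of_nonneg_left (hB _) (by positivity)
      _ = lam * B * (1 - lam) ^ n := by ring
  -- uniform bound on the valuations
  have hFb : ∀ m, |Fdisc lam a m| ≤ B := by
    intro m
    have h1 : ‖Fdisc lam a m‖ ≤ ∑' n : ℕ, ‖lam * (1 - lam) ^ n * a (m + n)‖ :=
      norm_tsum_le_tsum_norm (hsum m).norm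
    have h2 : ∑' n : ℕ, ‖lam * (1 - lam) ^ n * a (m + n)‖
        ≤ ∑' n : ℕ, (lam * B) * (1 - lam) ^ n := by
      apply Summable.tsum_le_tsum _ (hsum m).norm
        ((summable_geometric_of_lt_one hr0 hr1).mul_left _)
      intro n
      rw [Real.norm_eq_abs, abs_mul, abs_mul, abs_of_nonneg hlam0.le,
        abs_of_nonneg (pow_nonneg hr0 n)]
      calc lam * (1 - lam) ^ n * |a (m + n)| ≤ lam * (1 - lam) ^ n * B := by
            apply mul_le_mul_of_nonneg_left (hB _) (by positivity)
        _ = lam * B * (1 - lam) ^ n := by ring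
    have h3 : ∑' n : ℕ, (lam * B) * (1 - lam) ^ n = B := by
      rw [tsum_mul_left, tsum_geometric_of_lt_one hr0 hr1, sub_sub_cancel]
      field_simp
    rw [← Real.norm_eq_abs]
    calc ‖Fdisc lam a m‖ ≤ _ := h1
      _ ≤ _ := h2
      _ = B := h3
  -- the recursion
  have hrec : ∀ m, Fdisc lam a m = lam * a m + (1 - lam) * Fdisc lam a (m + 1) := by
    intro m
    have hidx : ∀ n : ℕ, m + (n + 1) = m + 1 + n := by intro n; omega
    rw [Fdisc, Summable.tsum_eq_zero_add (hsum m)]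
    congr 1
    · simp
    · rw [Fdisc, ← tsum_mul_left]
      congr 1
      ext n
      rw [hidx n]
      ring
  set F : ℕ → ℝ := fun m => Fdisc lam a m with hF
  -- summability of the shifted valuation series
  have hgeoB : ∀ c : ℝ, ∀ g : ℕ → ℝ, (∀ k, |g k| ≤ B) →
      Summable (fun k => c * ((1 - μ) ^ k * g k)) := by
    intro c g hg
    apply Summable.of_norm_bounded (g := fun k => (|c| * B) * (1 - μ) ^ k)
      ((summable_geometric_of_lt_one hs0 hs1).mul_left _)
    intro k
    rw [Real.norm_eq_abs, abs_mul, abs_mul, abs_of_nonneg (pow_nonneg hs0 k)]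
    calc |c| * ((1 - μ) ^ k * |g k|) ≤ |c| * ((1 - μ) ^ k * B) := by
          apply mul_le_mul_of_nonneg_left _ (abs_nonneg c)
          exact mul_le_mul_of_nonneg_left (hg k) (by positivity)
      _ = |c| * B * (1 - μ) ^ k := by ring
  have SF : Summable (fun k => (1 - μ) ^ k * F k) := by
    have := hgeoB 1 F hFb
    simpa using this
  have SF' : Summable (fun k => (1 - μ) ^ k * F (k + 1)) := by
    have := hgeoB 1 (fun k => F (k + 1)) (fun k => hFb (k + 1))
    simpa using this
  -- express the μ-valuation through the recursion
  have key : Fdisc μ a 0 = (μ / lam) * (∑' k : ℕ, (1 - μ) ^ k * F k)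
      - (μ / lam) * (1 - lam) * (∑' k : ℕ, (1 - μ) ^ k * F (k + 1)) := by
    rw [Fdisc]
    have heq : (fun k => μ * (1 - μ) ^ k * a (0 + k)) =
        (fun k => (μ / lam) * ((1 - μ) ^ k * F k)
          - ((μ / lam) * (1 - lam)) * ((1 - μ) ^ k * F (k + 1))) := by
      ext k
      have h := hrec k
      have : a k = (F k - (1 - lam) * F (k + 1)) / lam := by
        rw [hF]
        field_simp
        linarith [h]
      rw [zero_add, this]
      field_simp
    rw [heq, Summable.tsum_sub (hgeoB _ F hFb) (hgeoB _ (fun k => F (k+1)) (fun k => hFb (k+1))),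
      tsum_mul_left, tsum_mul_left]
  -- shift the first sum
  have shift : (∑' k : ℕ, (1 - μ) ^ k * F k)
      = F 0 + (1 - μ) * ∑' k : ℕ, (1 - μ) ^ k * F (k + 1) := by
    rw [Summable.tsum_eq_zero_add SF]
    congr 1
    · simp
    · rw [← tsum_mul_left]
      congr 1
      ext k
      ring
  rw [key, shift]
  ring
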